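/- Fix a finite Markov decision process and c ∈ [0,1). The operator F defined on functions d : S × S → ℝ with 0 ≤ d by F(d)(s_i, s_j) = max_{a ∈ A} [ (1−c)·|R(s_i,a) − R(s_j,a)| + c·W₁(P(·|s_i,a), P(·|s_j,a); d) ] is a contraction with Lipschitz constant c with respect to the supremum norm on bounded nonnegative functions S × S → ℝ, and consequently F has a unique bounded nonnegative fixed point d̃ (the bisimulation metric). -/

import Mathlib

open Finset

/-- `g` is a coupling of the probability mass functions `μ` and `ν` on a finite
set `S`. -/
def IsCoupling {S : Type} [Fintype S] (μ ν : S → ℝ) (g : S × S → ℝ) : Prop :=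
  (∀ p, 0 ≤ g p) ∧
  (∀ s, ∑ s', g (s, s') = μ s) ∧
  (∀ s', ∑ s, g (s, s') = ν s')

/-- The 1-Wasserstein distance between `μ` and `ν` with cost function `d`. -/
noncomputable def W1 {S : Type} [Fintype S] (μ ν : S → ℝ) (d : S × S → ℝ) : ℝ :=
  sInf {x | ∃ g : S × S → ℝ, IsCoupling μ ν g ∧ x = ∑ p, d p * g p}

section helpers
variable {S : Type} [Fintype S]

lemma W1_set_nonempty (μ ν : S → ℝ) (hμ0 : ∀ s, 0 ≤ μ s) (hν0 : ∀ s, 0 ≤ ν s)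
    (hμ1 : ∑ s, μ s = 1) (hν1 : ∑ s, ν s = 1) (d : S × S → ℝ) :
    {x | ∃ g : S × S → ℝ, IsCoupling μ ν g ∧ x = ∑ p, d p * g p}.Nonempty := by
  refine ⟨_, fun p => μ p.1 * ν p.2, ⟨fun p => mul_nonneg (hμ0 _) (hν0 _), ?_, ?_⟩, rfl⟩
  · intro s; simp only; rw [← Finset.mul_sum, hν1, mul_one]
  · intro s'; simp only; rw [← Finset.sum_mul, hμ1, one_mul]

lemma W1_set_bddBelow (μ ν : S → ℝ) (d : S × S → ℝ) (hd : ∀ p, 0 ≤ d p) :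
    BddBelow {x | ∃ g : S × S → ℝ, IsCoupling μ ν g ∧ x = ∑ p, d p * g p} := by
  refine ⟨0, fun x hx => ?_⟩
  obtain ⟨g, hg, rfl⟩ := hx
  exact Finset.sum_nonneg fun p _ => mul_nonneg (hd p) (hg.1 p)

lemma coupling_sum_one (μ ν : S → ℝ) (hμ1 : ∑ s, μ s = 1) (g : S × S → ℝ)
    (hg : IsCoupling μ ν g) : ∑ p, g p = 1 := by
  rw [Fintype.sum_prod_type]
  simp_rw [hg.2.1]
  exact hμ1

lemma W1_nonneg (μ ν : S → ℝ) (d : S × S → ℝ) (hd : ∀ p, 0 ≤ d p) :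
    0 ≤ W1 μ ν d := by
  refine Real.sInf_nonneg fun x hx => ?_
  obtain ⟨g, hg, rfl⟩ := hx
  exact Finset.sum_nonneg fun p _ => mul_nonneg (hd p) (hg.1 p)

lemma W1_le_add (μ ν : S → ℝ) (hμ0 : ∀ s, 0 ≤ μ s) (hν0 : ∀ s, 0 ≤ ν s)
    (hμ1 : ∑ s, μ s = 1) (hν1 : ∑ s, ν s = 1)
    (d d' : S × S → ℝ) (hd : ∀ p, 0 ≤ d p) (hd' : ∀ p, 0 ≤ d' p)
    (M : ℝ) (hM : ∀ p, |d p - d' p| ≤ M) :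
    W1 μ ν d ≤ W1 μ ν d' + M := by
  rw [← sub_le_iff_le_add]
  refine le_csInf (W1_set_nonempty μ ν hμ0 hν0 hμ1 hν1 d') ?_
  rintro b ⟨g, hg, rfl⟩
  rw [sub_le_iff_le_add]
  have h1 : W1 μ ν d ≤ ∑ p, d p * g p :=
    csInf_le (W1_set_bddBelow μ ν d hd) ⟨g, hg, rfl⟩
  refine h1.trans ?_
  have h2 : ∑ p, d p * g p ≤ ∑ p, (d' p * g p + M * g p) := by
    refine Finset.sum_le_sum fun p _ => ?_
    have := (abs_le.mp (hM p)).2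
    nlinarith [hg.1 p]
  rw [Finset.sum_add_distrib, ← Finset.mul_sum, coupling_sum_one μ ν hμ1 g hg, mul_one] at h2
  exact h2

lemma abs_W1_sub_le (μ ν : S → ℝ) (hμ0 : ∀ s, 0 ≤ μ s) (hν0 : ∀ s, 0 ≤ ν s)
    (hμ1 : ∑ s, μ s = 1) (hν1 : ∑ s, ν s = 1)
    (d d' : S × S → ℝ) (hd : ∀ p, 0 ≤ d p) (hd' : ∀ p, 0 ≤ d' p)
    (M : ℝ) (hM : ∀ p, |d p - d' p| ≤ M) :
    |W1 μ ν d - W1 μ ν d'| ≤ M := by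
  rw [abs_sub_le_iff]
  constructor
  · have := W1_le_add μ ν hμ0 hν0 hμ1 hν1 d d' hd hd' M hM; linarith
  · have := W1_le_add μ ν hμ0 hν0 hμ1 hν1 d' d hd' hd M
      (fun p => by rw [abs_sub_comm]; exact hM p); linarith
end helpers

/-- The operator whose unique fixed point is the bisimulation metric:
`F(d)(sᵢ, sⱼ) = max_a [(1-c)·|R(sᵢ,a) - R(sⱼ,a)| + c·W₁(P(·|sᵢ,a), P(·|sⱼ,a); d)]`. -/
noncomputable def bisimF {S A : Type} [Fintype S] [Fintype A] [Nonempty A]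
    (c : ℝ) (P : S → A → S → ℝ) (R : S → A → ℝ)
    (d : S × S → ℝ) (p : S × S) : ℝ :=
  univ.sup' univ_nonempty fun a =>
    (1 - c) * |R p.1 a - R p.2 a| + c * W1 (P p.1 a) (P p.2 a) d

section main
variable {S A : Type} [Fintype S] [Nonempty S] [Fintype A] [Nonempty A]

lemma bisimF_nonneg (c : ℝ) (hc0 : 0 ≤ c) (hc1 : c ≤ 1)
    (P : S → A → S → ℝ) (R : S → A → ℝ)
    (d : S × S → ℝ) (hd : ∀ p, 0 ≤ d p) (p : S × S) :
    0 ≤ bisimF c P R d p := by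
  obtain ⟨a⟩ := ‹Nonempty A›
  refine le_trans ?_ (Finset.le_sup' _ (Finset.mem_univ a))
  have h := W1_nonneg (P p.1 a) (P p.2 a) d hd
  have h1 : (0:ℝ) ≤ 1 - c := by linarith
  exact add_nonneg (mul_nonneg h1 (abs_nonneg _)) (mul_nonneg hc0 h)

lemma bisimF_abs_sub_le (c : ℝ) (hc0 : 0 ≤ c)
    (P : S → A → S → ℝ) (hP0 : ∀ s a s', 0 ≤ P s a s') (hP1 : ∀ s a, ∑ s', P s a s' = 1)
    (R : S → A → ℝ)
    (d d' : S × S → ℝ) (hd : ∀ p, 0 ≤ d p) (hd' : ∀ p, 0 ≤ d' p)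
    (M : ℝ) (hM : ∀ p, |d p - d' p| ≤ M) (p : S × S) :
    |bisimF c P R d p - bisimF c P R d' p| ≤ c * M := by
  have key : ∀ a : A,
      |((1 - c) * |R p.1 a - R p.2 a| + c * W1 (P p.1 a) (P p.2 a) d) -
       ((1 - c) * |R p.1 a - R p.2 a| + c * W1 (P p.1 a) (P p.2 a) d')| ≤ c * M := by
    intro a
    have := abs_W1_sub_le (P p.1 a) (P p.2 a) (hP0 p.1 a) (hP0 p.2 a)
      (hP1 p.1 a) (hP1 p.2 a) d d' hd hd' M hM
    have he : ((1 - c) * |R p.1 a - R p.2 a| + c * W1 (P p.1 a) (P p.2 a) d) -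
       ((1 - c) * |R p.1 a - R p.2 a| + c * W1 (P p.1 a) (P p.2 a) d') =
       c * (W1 (P p.1 a) (P p.2 a) d - W1 (P p.1 a) (P p.2 a) d') := by ring
    rw [he, abs_mul, abs_of_nonneg hc0]
    exact mul_le_mul_of_nonneg_left this hc0
  rw [abs_sub_le_iff]
  constructor <;> unfold bisimF <;>
  · rw [sub_le_iff_le_add]
    refine Finset.sup'_le _ _ fun a _ => ?_
    have h2 := Finset.le_sup' (fun a => (1 - c) * |R p.1 a - R p.2 a| +
      c * W1 (P p.1 a) (P p.2 a) d') (Finset.mem_univ a)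
    have h3 := Finset.le_sup' (fun a => (1 - c) * |R p.1 a - R p.2 a| +
      c * W1 (P p.1 a) (P p.2 a) d) (Finset.mem_univ a)
    have h4 := abs_le.mp (key a)
    linarith [h4.1, h4.2]

end main

theorem bisimF_contraction_and_unique_fixed_point
    {S A : Type} [Fintype S] [Nonempty S] [Fintype A] [Nonempty A]
    (c : ℝ) (hc0 : 0 ≤ c) (hc1 : c < 1)
    (P : S → A → S → ℝ)
    (hP0 : ∀ s a s', 0 ≤ P s a s')
    (hP1 : ∀ s a, ∑ s', P s a s' = 1)
    (R : S → A → ℝ) :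
    (∀ d d' : S × S → ℝ, (∀ p, 0 ≤ d p) → (∀ p, 0 ≤ d' p) →
      (univ.sup' univ_nonempty fun p : S × S =>
          |bisimF c P R d p - bisimF c P R d' p|) ≤
        c * univ.sup' univ_nonempty fun p : S × S => |d p - d' p|) ∧
    (∃! dt : S × S → ℝ, (∀ p, 0 ≤ dt p) ∧ bisimF c P R dt = dt) := by
  have contraction : ∀ d d' : S × S → ℝ, (∀ p, 0 ≤ d p) → (∀ p, 0 ≤ d' p) →
      (univ.sup' univ_nonempty fun p : S × S =>
          |bisimF c P R d p - bisimF c P R d' p|) ≤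
        c * univ.sup' univ_nonempty fun p : S × S => |d p - d' p| := by
    intro d d' hd hd'
    refine Finset.sup'_le _ _ fun p _ => ?_
    exact bisimF_abs_sub_le c hc0 P hP0 hP1 R d d' hd hd' _
      (fun q => Finset.le_sup' (fun q : S × S => |d q - d' q|) (Finset.mem_univ q)) p
  refine ⟨contraction, ?_⟩
  -- Existence via the Banach fixed point theorem on nonnegative functions
  have hclosed : IsClosed {d : S × S → ℝ | ∀ p, 0 ≤ d p} := by
    have he : {d : S × S → ℝ | ∀ p, 0 ≤ d p} = ⋂ p, {d | 0 ≤ d p} := by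
      ext d; simp [Set.mem_iInter]
    rw [he]
    exact isClosed_iInter fun p => isClosed_le continuous_const (continuous_apply p)
  haveI : CompleteSpace {d : S × S → ℝ // ∀ p, 0 ≤ d p} := hclosed.completeSpace_coe
  haveI : Nonempty {d : S × S → ℝ // ∀ p, 0 ≤ d p} := ⟨⟨fun _ => 0, fun _ => le_refl 0⟩⟩
  set Φ : {d : S × S → ℝ // ∀ p, 0 ≤ d p} → {d : S × S → ℝ // ∀ p, 0 ≤ d p} :=
    fun d => ⟨bisimF c P R d.1, bisimF_nonneg c hc0 hc1.le P R d.1 d.2⟩ with hΦ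
  have lip : LipschitzWith ⟨c, hc0⟩ Φ := by
    refine LipschitzWith.of_dist_le_mul fun x y => ?_
    rw [Subtype.dist_eq, Subtype.dist_eq]
    show dist (Φ x).1 (Φ y).1 ≤ c * dist x.1 y.1
    have hr : 0 ≤ c * dist x.1 y.1 := mul_nonneg hc0 dist_nonneg
    rw [dist_pi_le_iff hr]
    intro p
    rw [Real.dist_eq]
    refine bisimF_abs_sub_le c hc0 P hP0 hP1 R x.1 y.1 x.2 y.2 (dist x.1 y.1) ?_ p
    intro q
    rw [← Real.dist_eq]
    exact dist_le_pi_dist x.1 y.1 q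
  have hC : ContractingWith ⟨c, hc0⟩ Φ := ⟨by exact_mod_cast hc1, lip⟩
  set dt := hC.fixedPoint Φ with hdt
  have hfix : Φ dt = dt := hC.fixedPoint_isFixedPt
  have hfixv : bisimF c P R dt.1 = dt.1 := congrArg Subtype.val hfix
  refine ⟨dt.1, ⟨dt.2, ?_⟩, ?_⟩
  · exact hfixv
  · rintro d' ⟨hd'0, hd'fix⟩
    -- uniqueness from the contraction estimate
    have h1 := contraction d' dt.1 hd'0 dt.2
    rw [hd'fix, hfixv] at h1
    have hsup0 : (0:ℝ) ≤ univ.sup' univ_nonempty fun p : S × S => |d' p - dt.1 p| := by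
      obtain ⟨p⟩ := (inferInstance : Nonempty (S × S))
      exact le_trans (abs_nonneg _)
        (Finset.le_sup' (fun p : S × S => |d' p - dt.1 p|) (Finset.mem_univ p))
    have hsup : (univ.sup' univ_nonempty fun p : S × S => |d' p - dt.1 p|) ≤ 0 := by
      nlinarith
    funext p
    have := le_trans
      (Finset.le_sup' (fun p : S × S => |d' p - dt.1 p|) (Finset.mem_univ p)) hsup
    have h0 : |d' p - dt.1 p| = 0 := le_antisymm this (abs_nonneg _)
    have := abs_eq_zero.mp h0
    linarith
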